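/- Let n ≥ 3 be an integer and let v : ℝ → ℝ be a bounded, twice continuously differentiable function with v(t) ≥ 0 for all t ∈ ℝ satisfying the Delaunay ODE v''(t) − ((n−2)²/4)·v(t) + (n·(n−2)/4)·v(t)^((n+2)/(n−2)) = 0 for all t ∈ ℝ, and assume H(v(t), v'(t)) = 0 for all t ∈ ℝ. Then either v is identically 0, or there exists t₀ ∈ ℝ such that v(t) = (cosh(t − t₀))^((2−n)/2) for all t ∈ ℝ. -/

import Mathlib

/-- The Delaunay ODE: `v'' − ((n−2)²/4)·v + (n·(n−2)/4)·v^((n+2)/(n−2)) = 0`. -/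
def DelaunayODE (n : ℕ) (v : ℝ → ℝ) : Prop :=
  ∀ t : ℝ, deriv (deriv v) t - (((n : ℝ) - 2) ^ 2 / 4) * v t
    + ((n : ℝ) * ((n : ℝ) - 2) / 4) * v t ^ (((n : ℝ) + 2) / ((n : ℝ) - 2)) = 0

/-- The Hamiltonian energy of the Delaunay ODE:
`H(v, w) = w² − ((n−2)²/4)·v² + ((n−2)²/4)·v^(2n/(n−2))`. -/
noncomputable def delaunayH (n : ℕ) (v w : ℝ) : ℝ :=
  w ^ 2 - (((n : ℝ) - 2) ^ 2 / 4) * v ^ 2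
    + (((n : ℝ) - 2) ^ 2 / 4) * v ^ (2 * (n : ℝ) / ((n : ℝ) - 2))


open Real Set

noncomputable def dU (N : ℝ) (v : ℝ → ℝ) (t : ℝ) : ℝ := v t ^ (2 / (2 - N))
noncomputable def dW (N : ℝ) (v : ℝ → ℝ) (t : ℝ) : ℝ :=
  2 / (2 - N) * v t ^ (2 / (2 - N) - 1) * deriv v t
noncomputable def dP (N : ℝ) (v : ℝ → ℝ) (t : ℝ) : ℝ :=
  (dU N v t - dW N v t) * Real.exp t
noncomputable def dQ (N : ℝ) (v : ℝ → ℝ) (t : ℝ) : ℝ :=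
  (dU N v t + dW N v t) * Real.exp (-t)

set_option maxHeartbeats 2000000 in
lemma dKey {N : ℝ} (hN : 3 ≤ N) {v : ℝ → ℝ} {t : ℝ}
    (hv : HasDerivAt v (deriv v t) t)
    (hw : HasDerivAt (deriv v) (deriv (deriv v) t) t)
    (hode : deriv (deriv v) t - ((N - 2) ^ 2 / 4) * v t
      + (N * (N - 2) / 4) * v t ^ ((N + 2) / (N - 2)) = 0)
    (hH : (deriv v t) ^ 2 - ((N - 2) ^ 2 / 4) * (v t) ^ 2
      + ((N - 2) ^ 2 / 4) * v t ^ (2 * N / (N - 2)) = 0)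
    (hpos : 0 < v t) (hle : v t ≤ 1) :
    HasDerivAt (dP N v) 0 t ∧ HasDerivAt (dQ N v) 0 t ∧
      dP N v t * dQ N v t = 1 ∧ 0 < dU N v t - dW N v t ∧ 0 < dU N v t + dW N v t := by
  have hm : N - 2 ≠ 0 := by intro h; nlinarith [h]
  have hm2 : (2 : ℝ) - N ≠ 0 := by intro h; nlinarith [h]
  have e3 : v t ^ ((2 / (2 - N)) - 1) * v t = v t ^ (2 / (2 - N)) := by
    nth_rewrite 2 [show v t = v t ^ (1:ℝ) from (Real.rpow_one _).symm]
    rw [← Real.rpow_add hpos]; congr 1; ring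
  have e1 : v t ^ ((2 / (2 - N)) - 1 - 1) * v t ^ (2:ℝ) = v t ^ (2 / (2 - N)) := by
    rw [← Real.rpow_add hpos]; congr 1; ring
  have e2 : v t ^ ((2 / (2 - N)) - 1 - 1) * v t ^ (2 * N / (N - 2)) = v t ^ (2 / (N - 2)) := by
    rw [← Real.rpow_add hpos]; congr 1; field_simp; ring
  have e4 : v t ^ ((2 / (2 - N)) - 1) * v t ^ ((N + 2) / (N - 2)) = v t ^ (2 / (N - 2)) := by
    rw [← Real.rpow_add hpos]; congr 1; field_simp; ring
  have e5 : v t ^ ((2 / (2 - N)) - 1) * v t ^ ((2 / (2 - N)) - 1) * v t ^ (2:ℝ) = v t ^ (2 / (2 - N)) * v t ^ (2 / (2 - N)) := by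
    rw [← Real.rpow_add hpos, ← Real.rpow_add hpos, ← Real.rpow_add hpos]; congr 1; ring
  have e6 : v t ^ ((2 / (2 - N)) - 1) * v t ^ ((2 / (2 - N)) - 1) * v t ^ (2 * N / (N - 2)) = 1 := by
    rw [← Real.rpow_add hpos, ← Real.rpow_add hpos,
      show (2 / (2 - N)) - 1 + ((2 / (2 - N)) - 1) + 2 * N / (N - 2) = 0 by field_simp; ring, Real.rpow_zero]
  have hX : (v t) ^ (2:ℕ) = v t ^ (2:ℝ) := by
    rw [← Real.rpow_natCast (v t) 2]; norm_num
  have hc1 : (2 / (2 - N)) * ((2 / (2 - N)) - 1) * ((N - 2) ^ 2 / 4) + (2 / (2 - N)) * ((N - 2) ^ 2 / 4) = 1 := by field_simp; ring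
  have hc2 : (2 / (2 - N)) * ((2 / (2 - N)) - 1) * ((N - 2) ^ 2 / 4) + (2 / (2 - N)) * (N * (N - 2) / 4) = 0 := by field_simp; ring
  have hc3 : (2 / (2 - N)) * (2 / (2 - N)) * ((N - 2) ^ 2 / 4) = 1 := by field_simp; ring
  have hode' : deriv (deriv v) t = ((N - 2) ^ 2 / 4) * v t - (N * (N - 2) / 4) * v t ^ ((N + 2) / (N - 2)) := by linarith
  have hH' : deriv v t ^ 2 = ((N - 2) ^ 2 / 4) * v t ^ (2:ℝ) - ((N - 2) ^ 2 / 4) * v t ^ (2 * N / (N - 2)) := by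
    rw [← hX]; linarith
  have hU : HasDerivAt (dU N v) (dW N v t) t := by
    have h1 := (Real.hasDerivAt_rpow_const (x := v t) (p := (2 / (2 - N))) (Or.inl hpos.ne')).comp t hv
    exact h1
  have hWd : HasDerivAt (dW N v) (dU N v t) t := by
    have h2 := (Real.hasDerivAt_rpow_const (x := v t) (p := (2 / (2 - N)) - 1) (Or.inl hpos.ne')).comp t hv
    have h3 : HasDerivAt (fun s => (2 / (2 - N)) * v s ^ ((2 / (2 - N)) - 1))
        ((2 / (2 - N)) * (((2 / (2 - N)) - 1) * v t ^ ((2 / (2 - N)) - 1 - 1) * deriv v t)) t := by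
      simpa [mul_assoc] using h2.const_mul ((2 / (2 - N)))
    have h4 := h3.mul hw
    have h5 : (2 / (2 - N)) * (((2 / (2 - N)) - 1) * v t ^ ((2 / (2 - N)) - 1 - 1) * deriv v t) * deriv v t
        + (2 / (2 - N)) * v t ^ ((2 / (2 - N)) - 1) * deriv (deriv v) t = dU N v t := by
      show _ = v t ^ (2 / (2 - N))
      linear_combination ((2 / (2 - N)) * ((2 / (2 - N)) - 1) * v t ^ ((2 / (2 - N)) - 1 - 1)) * hH'
        + ((2 / (2 - N)) * v t ^ ((2 / (2 - N)) - 1)) * hode' +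
        (((N - 2) ^ 2 / 4) * (2 / (2 - N)) * ((2 / (2 - N)) - 1)) * e1 - (((N - 2) ^ 2 / 4) * (2 / (2 - N)) * ((2 / (2 - N)) - 1)) * e2 + ((2 / (2 - N)) * ((N - 2) ^ 2 / 4)) * e3
        - ((2 / (2 - N)) * (N * (N - 2) / 4)) * e4 + (v t ^ (2 / (2 - N))) * hc1 - (v t ^ (2 / (N - 2))) * hc2
    rw [← h5]
    exact h4
  have hW2 : dW N v t ^ 2 = dU N v t ^ 2 - 1 := by
    show ((2 / (2 - N)) * v t ^ ((2 / (2 - N)) - 1) * deriv v t) ^ 2 = (v t ^ (2 / (2 - N))) ^ 2 - 1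
    linear_combination ((2 / (2 - N)) * (2 / (2 - N)) * v t ^ ((2 / (2 - N)) - 1) * v t ^ ((2 / (2 - N)) - 1)) * hH' +
      ((2 / (2 - N)) * (2 / (2 - N)) * ((N - 2) ^ 2 / 4)) * e5 - ((2 / (2 - N)) * (2 / (2 - N)) * ((N - 2) ^ 2 / 4)) * e6 + (v t ^ (2 / (2 - N)) * v t ^ (2 / (2 - N)) - 1) * hc3
  have hu1 : 1 ≤ dU N v t := by
    have hs0 : (2 / (2 - N)) ≤ 0 := by
      apply div_nonpos_of_nonneg_of_nonpos <;> nlinarith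
    exact Real.one_le_rpow_of_pos_of_le_one_of_nonpos hpos hle hs0
  have hPQpos : 0 < dU N v t - dW N v t ∧ 0 < dU N v t + dW N v t := by
    constructor <;> nlinarith [hW2, hu1, sq_nonneg (dW N v t)]
  have hexp : HasDerivAt (fun s : ℝ => Real.exp (-s)) (-Real.exp (-t)) t := by
    have h := (hasDerivAt_neg t).exp
    rw [mul_neg_one] at h
    exact h
  refine ⟨?_, ?_, ?_, hPQpos.1, hPQpos.2⟩
  · have h := (hU.sub hWd).mul (Real.hasDerivAt_exp t)
    have hz : (dW N v t - dU N v t) * Real.exp t + (dU N v t - dW N v t) * Real.exp t = 0 := by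
      ring
    rw [← hz]
    exact h
  · have h := (hU.add hWd).mul hexp
    have hz : (dW N v t + dU N v t) * Real.exp (-t) +
        (dU N v t + dW N v t) * -Real.exp (-t) = 0 := by ring
    rw [← hz]
    exact h
  · show (dU N v t - dW N v t) * Real.exp t * ((dU N v t + dW N v t) * Real.exp (-t)) = 1
    rw [show (dU N v t - dW N v t) * Real.exp t * ((dU N v t + dW N v t) * Real.exp (-t))
      = (dU N v t ^ 2 - dW N v t ^ 2) * (Real.exp t * Real.exp (-t)) by ring,
      ← Real.exp_add]
    simp only [add_neg_cancel, Real.exp_zero, mul_one]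
    nlinarith [hW2]

lemma le_one_of_energy {N : ℝ} (hN : 3 ≤ N) {x w : ℝ} (hx : 0 ≤ x)
    (h : w ^ 2 - ((N - 2) ^ 2 / 4) * x ^ 2 + ((N - 2) ^ 2 / 4) * x ^ (2 * N / (N - 2)) = 0) :
    x ≤ 1 := by
  by_contra hc
  push_neg at hc
  have hN2 : (0:ℝ) < N - 2 := by linarith
  have h2 : (2:ℝ) < 2 * N / (N - 2) := by
    rw [lt_div_iff₀ hN2]; nlinarith
  have hlt : x ^ (2:ℝ) < x ^ (2 * N / (N - 2)) := Real.rpow_lt_rpow_of_exponent_lt hc h2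
  have hX : x ^ (2:ℕ) = x ^ (2:ℝ) := by rw [← Real.rpow_natCast x 2]; norm_num
  rw [hX] at h
  have hc4 : (0:ℝ) < (N - 2) ^ 2 / 4 := by positivity
  nlinarith [mul_pos hc4 (sub_pos.mpr hlt), sq_nonneg w]

theorem stmt_7 (n : ℕ) (hn : 3 ≤ n) (v : ℝ → ℝ)
    (hbdd : ∃ C : ℝ, ∀ t : ℝ, |v t| ≤ C) (hC2 : ContDiff ℝ 2 v)
    (hnn : ∀ t : ℝ, 0 ≤ v t) (hode : DelaunayODE n v)
    (hH : ∀ t : ℝ, delaunayH n (v t) (deriv v t) = 0) :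
    (∀ t : ℝ, v t = 0) ∨
      ∃ t₀ : ℝ, ∀ t : ℝ, v t = Real.cosh (t - t₀) ^ ((2 - (n : ℝ)) / 2) := by
  set N : ℝ := (n : ℝ) with hNdef
  have hN : (3:ℝ) ≤ N := by rw [hNdef]; exact_mod_cast hn
  have hm2 : (2:ℝ) - N ≠ 0 := by intro h; nlinarith
  have hσ : (2 / (2 - N) : ℝ) ≠ 0 := div_ne_zero two_ne_zero hm2
  -- differentiability facts
  have h21 : ContDiff ℝ ((1:WithTop ℕ∞) + 1) v := by
    convert hC2 using 2
    norm_num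
  have hd1 : Differentiable ℝ v := hC2.differentiable (by norm_num)
  have hd2 : Differentiable ℝ (deriv v) :=
    (contDiff_succ_iff_deriv.mp h21).2.2.differentiable one_ne_zero
  have hode' : ∀ t, deriv (deriv v) t - ((N - 2) ^ 2 / 4) * v t
      + (N * (N - 2) / 4) * v t ^ ((N + 2) / (N - 2)) = 0 := hode
  have hH' : ∀ t, (deriv v t) ^ 2 - ((N - 2) ^ 2 / 4) * (v t) ^ 2
      + ((N - 2) ^ 2 / 4) * v t ^ (2 * N / (N - 2)) = 0 := fun t => hH t
  have hle1 : ∀ t, v t ≤ 1 := fun t => le_one_of_energy hN (hnn t) (hH' t)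
  have hKey : ∀ t, 0 < v t →
      HasDerivAt (dP N v) 0 t ∧ HasDerivAt (dQ N v) 0 t ∧
      dP N v t * dQ N v t = 1 ∧ 0 < dU N v t - dW N v t ∧ 0 < dU N v t + dW N v t :=
    fun t ht => dKey hN (hd1 t).hasDerivAt (hd2 t).hasDerivAt (hode' t) (hH' t) ht (hle1 t)
  -- recovering v from dU
  have hrec : ∀ t, 0 < v t → v t = dU N v t ^ ((2 - N) / 2) := by
    intro t ht
    have : dU N v t ^ ((2 - N) / 2) = (v t ^ (2 / (2 - N))) ^ ((2 - N) / 2) := rfl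
    rw [this, ← Real.rpow_mul (hnn t)]
    rw [show 2 / (2 - N) * ((2 - N) / 2) = 1 by field_simp, Real.rpow_one]
  by_cases hz : ∃ s, v s = 0
  · -- v vanishes somewhere: show it is identically zero
    left
    by_contra hne
    push_neg at hne
    obtain ⟨s, hs⟩ := hne
    have hspos : 0 < v s := lt_of_le_of_ne (hnn s) (Ne.symm hs)
    obtain ⟨t₁, ht₁⟩ := hz
    -- constancy of dP, dQ on intervals of positivity
    have hconst : ∀ α β : ℝ, α ≤ β → (∀ x, x ∈ Set.Icc α β → 0 < v x) →
        dP N v β = dP N v α ∧ dQ N v β = dQ N v α := by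
      intro α β hab hposI
      constructor
      · exact constant_of_has_deriv_right_zero
          (fun x hx => (hKey x (hposI x hx)).1.continuousAt.continuousWithinAt)
          (fun x hx => (hKey x (hposI x (Set.mem_Icc.mpr ⟨hx.1, hx.2.le⟩))).1.hasDerivWithinAt)
          β (Set.right_mem_Icc.mpr hab)
      · exact constant_of_has_deriv_right_zero
          (fun x hx => (hKey x (hposI x hx)).2.1.continuousAt.continuousWithinAt)
          (fun x hx => (hKey x (hposI x (Set.mem_Icc.mpr ⟨hx.1, hx.2.le⟩))).2.1.hasDerivWithinAt)
          β (Set.right_mem_Icc.mpr hab)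
    have hUval : ∀ t : ℝ,
        dU N v t = (dP N v t * Real.exp (-t) + dQ N v t * Real.exp t) / 2 := by
      intro t
      show dU N v t = ((dU N v t - dW N v t) * Real.exp t * Real.exp (-t)
        + (dU N v t + dW N v t) * Real.exp (-t) * Real.exp t) / 2
      rw [mul_assoc, ← Real.exp_add, mul_assoc, ← Real.exp_add]
      simp
    have hst : s ≠ t₁ := fun h => hs (h ▸ ht₁)
    rcases hst.lt_or_gt with hlt | hlt
    · -- s < t₁ : take the first zero to the right of s
      have hZcl : IsClosed (Set.Icc s t₁ ∩ {x | v x = 0}) :=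
        isClosed_Icc.inter (isClosed_eq hd1.continuous continuous_const)
      have hZne : (Set.Icc s t₁ ∩ {x | v x = 0}).Nonempty :=
        ⟨t₁, Set.mem_Icc.mpr ⟨hlt.le, le_refl _⟩, ht₁⟩
      have hZbdd : BddBelow (Set.Icc s t₁ ∩ {x | v x = 0}) := ⟨s, fun x hx => hx.1.1⟩
      set r := sInf (Set.Icc s t₁ ∩ {x | v x = 0}) with hrdef
      have hrZ := hZcl.csInf_mem hZne hZbdd
      have hvr : v r = 0 := hrZ.2
      have hsr : s < r :=
        lt_of_le_of_ne hrZ.1.1 (fun h => hs (by rw [h]; exact hvr))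
      have hposI : ∀ x, x ∈ Set.Ico s r → 0 < v x := by
        intro x hx
        rcases (hnn x).lt_or_eq with h | h
        · exact h
        · exfalso
          have hxZ : x ∈ Set.Icc s t₁ ∩ {x | v x = 0} :=
            ⟨Set.mem_Icc.mpr ⟨hx.1, le_trans hx.2.le hrZ.1.2⟩, h.symm⟩
          exact absurd (csInf_le hZbdd hxZ) (not_le.mpr hx.2)
      obtain ⟨_, _, hPQs, hbpos, hapos⟩ := hKey s hspos
      have hb : 0 < dP N v s := mul_pos hbpos (Real.exp_pos s)
      have ha : 0 < dQ N v s := mul_pos hapos (Real.exp_pos (-s))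
      obtain ⟨M, hMdef⟩ : ∃ M : ℝ,
          M = (dQ N v s * Real.exp r + dP N v s * Real.exp (-s)) / 2 := ⟨_, rfl⟩
      have hMpos : 0 < M := by rw [hMdef]; positivity
      have hlow : ∀ t, t ∈ Set.Ico s r → M ^ ((2 - N) / 2) ≤ v t := by
        intro t ht
        have hposIcc : ∀ x, x ∈ Set.Icc s t → 0 < v x :=
          fun x hx => hposI x ⟨hx.1, lt_of_le_of_lt hx.2 ht.2⟩
        have hPt : dP N v t = dP N v s := (hconst s t ht.1 hposIcc).1
        have hQt : dQ N v t = dQ N v s := (hconst s t ht.1 hposIcc).2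
        have hUle : dU N v t ≤ M := by
          rw [hUval t, hPt, hQt, hMdef]
          have h1 := mul_le_mul_of_nonneg_left
            (Real.exp_le_exp.mpr ht.2.le) ha.le
          have h2 := mul_le_mul_of_nonneg_left
            (Real.exp_le_exp.mpr (neg_le_neg ht.1)) hb.le
          linarith
        rw [hrec t (hposI t ht)]
        exact Real.rpow_le_rpow_of_nonpos (Real.rpow_pos_of_pos (hposI t ht) _) hUle
          (by nlinarith)
      have hεr : M ^ ((2 - N) / 2) ≤ v r := by
        refine ge_of_tendsto (x := nhdsWithin r (Set.Iio r))
          ((hd1.continuous.tendsto r).mono_left nhdsWithin_le_nhds) ?_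
        filter_upwards [Ioo_mem_nhdsLT_of_mem (Set.mem_Ioc.mpr ⟨hsr, le_refl r⟩)] with x hx
        exact hlow x ⟨hx.1.le, hx.2⟩
      rw [hvr] at hεr
      exact absurd hεr (not_le.mpr (Real.rpow_pos_of_pos hMpos _))
    · -- t₁ < s : take the last zero to the left of s
      have hZcl : IsClosed (Set.Icc t₁ s ∩ {x | v x = 0}) :=
        isClosed_Icc.inter (isClosed_eq hd1.continuous continuous_const)
      have hZne : (Set.Icc t₁ s ∩ {x | v x = 0}).Nonempty :=
        ⟨t₁, Set.mem_Icc.mpr ⟨le_refl _, hlt.le⟩, ht₁⟩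
      have hZbdd : BddAbove (Set.Icc t₁ s ∩ {x | v x = 0}) := ⟨s, fun x hx => hx.1.2⟩
      set r := sSup (Set.Icc t₁ s ∩ {x | v x = 0}) with hrdef
      have hrZ := hZcl.csSup_mem hZne hZbdd
      have hvr : v r = 0 := hrZ.2
      have hsr : r < s :=
        lt_of_le_of_ne hrZ.1.2 (fun h => hs (by rw [← h]; exact hvr))
      have hposI : ∀ x, x ∈ Set.Ioc r s → 0 < v x := by
        intro x hx
        rcases (hnn x).lt_or_eq with h | h
        · exact h
        · exfalso
          have hxZ : x ∈ Set.Icc t₁ s ∩ {x | v x = 0} :=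
            ⟨Set.mem_Icc.mpr ⟨le_trans hrZ.1.1 hx.1.le, hx.2⟩, h.symm⟩
          exact absurd (le_csSup hZbdd hxZ) (not_le.mpr hx.1)
      obtain ⟨_, _, hPQs, hbpos, hapos⟩ := hKey s hspos
      have hb : 0 < dP N v s := mul_pos hbpos (Real.exp_pos s)
      have ha : 0 < dQ N v s := mul_pos hapos (Real.exp_pos (-s))
      obtain ⟨M, hMdef⟩ : ∃ M : ℝ,
          M = (dQ N v s * Real.exp s + dP N v s * Real.exp (-r)) / 2 := ⟨_, rfl⟩
      have hMpos : 0 < M := by rw [hMdef]; positivity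
      have hlow : ∀ t, t ∈ Set.Ioc r s → M ^ ((2 - N) / 2) ≤ v t := by
        intro t ht
        have hposIcc : ∀ x, x ∈ Set.Icc t s → 0 < v x :=
          fun x hx => hposI x ⟨lt_of_lt_of_le ht.1 hx.1, hx.2⟩
        have hPt : dP N v t = dP N v s := ((hconst t s ht.2 hposIcc).1).symm
        have hQt : dQ N v t = dQ N v s := ((hconst t s ht.2 hposIcc).2).symm
        have hUle : dU N v t ≤ M := by
          rw [hUval t, hPt, hQt, hMdef]
          have h1 := mul_le_mul_of_nonneg_left
            (Real.exp_le_exp.mpr ht.2) ha.le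
          have h2 := mul_le_mul_of_nonneg_left
            (Real.exp_le_exp.mpr (neg_le_neg ht.1.le)) hb.le
          linarith
        rw [hrec t (hposI t ht)]
        exact Real.rpow_le_rpow_of_nonpos (Real.rpow_pos_of_pos (hposI t ht) _) hUle
          (by nlinarith)
      have hεr : M ^ ((2 - N) / 2) ≤ v r := by
        refine ge_of_tendsto (x := nhdsWithin r (Set.Ioi r))
          ((hd1.continuous.tendsto r).mono_left nhdsWithin_le_nhds) ?_
        filter_upwards [Ioo_mem_nhdsGT_of_mem (Set.mem_Ico.mpr ⟨le_refl r, hsr⟩)] with x hx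
        exact hlow x ⟨hx.1, hx.2.le⟩
      rw [hvr] at hεr
      exact absurd hεr (not_le.mpr (Real.rpow_pos_of_pos hMpos _))
  · -- v is everywhere positive
    push_neg at hz
    have hpos : ∀ t, 0 < v t := fun t => lt_of_le_of_ne (hnn t) (Ne.symm (hz t))
    right
    have hPd : ∀ t, HasDerivAt (dP N v) 0 t := fun t => (hKey t (hpos t)).1
    have hQd : ∀ t, HasDerivAt (dQ N v) 0 t := fun t => (hKey t (hpos t)).2.1
    have hPc : ∀ t, dP N v t = dP N v 0 := fun t =>
      is_const_of_deriv_eq_zero (fun x => (hPd x).differentiableAt)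
        (fun x => (hPd x).deriv) t 0
    have hQc : ∀ t, dQ N v t = dQ N v 0 := fun t =>
      is_const_of_deriv_eq_zero (fun x => (hQd x).differentiableAt)
        (fun x => (hQd x).deriv) t 0
    obtain ⟨_, _, hPQ, hbpos0, hapos0⟩ := hKey 0 (hpos 0)
    have hb : 0 < dP N v 0 := mul_pos hbpos0 (Real.exp_pos 0)
    have ha : 0 < dQ N v 0 := mul_pos hapos0 (Real.exp_pos (-0))
    refine ⟨Real.log (dP N v 0), fun t => ?_⟩
    have h1 : dU N v t - dW N v t = dP N v 0 * Real.exp (-t) := by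
      rw [← hPc t]
      show dU N v t - dW N v t = (dU N v t - dW N v t) * Real.exp t * Real.exp (-t)
      rw [mul_assoc, ← Real.exp_add]
      simp
    have h2 : dU N v t + dW N v t = dQ N v 0 * Real.exp t := by
      rw [← hQc t]
      show dU N v t + dW N v t = (dU N v t + dW N v t) * Real.exp (-t) * Real.exp t
      rw [mul_assoc, ← Real.exp_add]
      simp
    have hu : dU N v t
        = (dQ N v 0 * Real.exp t + dP N v 0 * Real.exp (-t)) / 2 := by linarith
    have hea : Real.exp (Real.log (dP N v 0)) = dP N v 0 := Real.exp_log hb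
    have haa : dQ N v 0 = (dP N v 0)⁻¹ := by
      have := hPQ
      field_simp
      linear_combination hPQ
    have hcosh : dU N v t = Real.cosh (t - Real.log (dP N v 0)) := by
      rw [Real.cosh_eq, hu, Real.exp_sub, hea,
        show -(t - Real.log (dP N v 0)) = Real.log (dP N v 0) + (-t) by ring,
        Real.exp_add, hea, haa]
      field_simp
    rw [hrec t (hpos t), hcosh]
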